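/- Let n ≥ 2. In the root system of type A_n, the minimum, over unordered pairs {α_i, α_j} of distinct simple roots in Π, of the resonant codimension of Π ∖ {α_i, α_j} equals 2n − 1. -/

import Mathlib

open Fin.NatCast

private def ee (n : ℕ) (i : Fin (n+1)) : Fin (n+1) → ℝ := Pi.single i 1

private def aa (n : ℕ) (k : Fin n) : Fin (n+1) → ℝ := ee n k.castSucc - ee n k.succ

private lemma ee_apply (n : ℕ) (a c : Fin (n+1)) :
    ee n a c = if c = a then 1 else 0 := Pi.single_apply a 1 c

private lemma ee_sub_inj (n : ℕ) {a b c d : Fin (n+1)} (hab : a ≠ b) (hcd : c ≠ d)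
    (h : ee n a - ee n b = ee n c - ee n d) : a = c ∧ b = d := by
  have ha := congrFun h a
  have hb := congrFun h b
  simp only [Pi.sub_apply, ee_apply] at ha hb
  split_ifs at ha hb <;>
    constructor <;>
      first
        | assumption
        | (exfalso; subst_vars; first | exact hab rfl | exact hcd rfl | (simp_all <;> norm_num at *))

private noncomputable def fI (n : ℕ) (i : Fin n) : (Fin (n+1) → ℝ) →ₗ[ℝ] ℝ :=
  ∑ t ∈ Finset.univ.filter (fun t : Fin (n+1) => t.val ≤ i.val), LinearMap.proj t

private lemma fI_ee (n : ℕ) (i : Fin n) (a : Fin (n+1)) :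
    fI n i (ee n a) = if a.val ≤ i.val then 1 else 0 := by
  simp only [fI, LinearMap.coe_sum, Finset.sum_apply, LinearMap.proj_apply, ee,
    Pi.single_apply]
  rw [Finset.sum_ite_eq' _ a (fun _ => (1:ℝ))]
  simp

private lemma fI_aa (n : ℕ) (i : Fin n) (k : Fin n) :
    fI n i (aa n k) = if k = i then 1 else 0 := by
  simp only [aa, map_sub, fI_ee, Fin.coe_castSucc, Fin.val_succ]
  rcases eq_or_ne k i with rfl | hne
  · simp
  · rw [if_neg hne]
    have hv : k.val ≠ i.val := fun h => hne (Fin.ext h)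
    split_ifs with h1 h2 h3
    · norm_num
    · exfalso; exact hv (by omega)
    · exfalso; exact hv (by omega)
    · norm_num

private lemma ee_sub_step (n : ℕ) (a b : Fin (n+1)) (h : b.val = a.val + 1) :
    ee n a - ee n b = aa n ⟨a.val, by have := b.isLt; omega⟩ := by
  have h1 : a = Fin.castSucc ⟨a.val, by have := b.isLt; omega⟩ := Fin.ext rfl
  have h2 : b = Fin.succ ⟨a.val, by have := b.isLt; omega⟩ := Fin.ext (by simp [h])
  rw [aa, ← h1, ← h2]

private lemma mem_span_of_interval (n : ℕ) (K : Set (Fin n)) :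
    ∀ (m : ℕ) (a b : Fin (n+1)), b.val = a.val + m + 1 →
    (∀ k : Fin n, a.val ≤ k.val → k.val < b.val → k ∈ K) →
    ee n a - ee n b ∈ Submodule.span ℝ (aa n '' K) := by
  intro m
  induction m with
  | zero =>
    intro a b hb hK
    have hlt : a.val < n := by have := b.isLt; omega
    rw [ee_sub_step n a b (by omega)]
    exact Submodule.subset_span ⟨⟨a.val, hlt⟩, hK _ le_rfl (by simp [hb]), rfl⟩
  | succ m ih =>
    intro a b hb hK
    have ha' : a.val + 1 < n + 1 := by have := b.isLt; omega
    set a' : Fin (n+1) := ⟨a.val + 1, ha'⟩ with ha'def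
    have hsplit : ee n a - ee n b = (ee n a - ee n a') + (ee n a' - ee n b) :=
      (sub_add_sub_cancel _ _ _).symm
    rw [hsplit]
    refine Submodule.add_mem _ ?_ ?_
    · rw [ee_sub_step n a a' rfl]
      exact Submodule.subset_span
        ⟨⟨a.val, by omega⟩, hK _ le_rfl (show a.val < b.val by omega), rfl⟩
    · have hmk : a'.val = a.val + 1 := rfl
      exact ih a' b (by omega) (fun k h1 h2 => hK k (by rw [hmk] at h1; omega) h2)

private lemma aa_inj (n : ℕ) {k l : Fin n} (h : aa n k = aa n l) : k = l := by
  have := ee_sub_inj n (a := k.castSucc) (b := k.succ) (c := l.castSucc) (d := l.succ)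
    (by simp [Fin.ext_iff]) (by simp [Fin.ext_iff]) h
  exact Fin.ext (by simpa [Fin.ext_iff] using this.1)

private lemma notin_span (n : ℕ) (i j c : Fin n) (hc : c = i ∨ c = j)
    (a b : Fin (n+1)) (ha : a.val ≤ c.val) (hb : c.val < b.val) :
    ee n a - ee n b ∉ Submodule.span ℝ (Set.range (aa n) \ {aa n i, aa n j}) := by
  intro hmem
  have hker : Set.range (aa n) \ {aa n i, aa n j} ⊆ (LinearMap.ker (fI n c) : Set _) := by
    rintro v ⟨⟨k, rfl⟩, hv⟩
    simp only [Set.mem_insert_iff, Set.mem_singleton_iff, not_or] at hv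
    have hkc : k ≠ c := by
      rcases hc with rfl | rfl
      · exact fun h => hv.1 (by rw [h])
      · exact fun h => hv.2 (by rw [h])
    simp [SetLike.mem_coe, LinearMap.mem_ker, fI_aa, hkc]
  have h0 : fI n c (ee n a - ee n b) = 0 := by
    have := Submodule.span_le.mpr hker
    exact LinearMap.mem_ker.mp (this hmem)
  rw [map_sub, fI_ee, fI_ee, if_pos ha, if_neg (by omega)] at h0
  norm_num at h0

private lemma Spn_finite (n : ℕ) :
    ({v | ∃ a b : Fin (n+1), a < b ∧ v = ee n a - ee n b} : Set (Fin (n+1) → ℝ)).Finite := by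
  apply Set.Finite.subset (Set.finite_range (fun p : Fin (n+1) × Fin (n+1) => ee n p.1 - ee n p.2))
  rintro v ⟨a, b, _, rfl⟩
  exact ⟨(a, b), rfl⟩

private lemma lower_bound (n : ℕ) (i j : Fin n) (hij : i.val < j.val) :
    2 * n - 1 ≤ Set.ncard {v | (∃ a b : Fin (n+1), a < b ∧ v = ee n a - ee n b) ∧
      v ∉ Submodule.span ℝ (Set.range (aa n) \ {aa n i, aa n j})} := by
  have hjn : j.val < n := j.isLt
  set ii := i.val with hii
  set jj := j.val with hjj
  set q : ℕ → ℕ × ℕ := fun t =>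
    if t ≤ ii then (t, ii+1)
    else if t < n then (ii, t+1)
    else if t < n + jj then (if t - n < ii then t - n else t - n + 1, jj+1)
    else (jj, t - n + 2) with hq
  have hbound : ∀ t, t < 2*n - 1 → (q t).1 < (q t).2 ∧ (q t).2 ≤ n := by
    intro t ht; simp only [hq]; split_ifs <;> constructor <;> simp <;> omega
  have hcross : ∀ t, t < 2*n - 1 →
      ((q t).1 ≤ ii ∧ ii < (q t).2) ∨ ((q t).1 ≤ jj ∧ jj < (q t).2) := by
    intro t ht; simp only [hq]
    split_ifs <;> [left; left; right; right; right] <;> constructor <;> simp <;> omega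
  have hqinj : ∀ s, s < 2*n-1 → ∀ t, t < 2*n-1 → q s = q t → s = t := by
    intro s hs t ht h
    simp only [hq] at h
    split_ifs at h <;> (simp only [Prod.mk.injEq] at h; omega)
  set g : Fin (2*n-1) → (Fin (n+1) → ℝ) := fun t =>
    ee n ((q t.val).1 : Fin (n+1)) - ee n ((q t.val).2 : Fin (n+1)) with hg
  have hvalcast : ∀ t : Fin (2*n-1),
      (((q t.val).1 : Fin (n+1)) : ℕ) = (q t.val).1 ∧
      (((q t.val).2 : Fin (n+1)) : ℕ) = (q t.val).2 := by
    intro t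
    obtain ⟨h1, h2⟩ := hbound t.val t.isLt
    exact ⟨Fin.val_cast_of_lt (by omega), Fin.val_cast_of_lt (by omega)⟩
  have hne : ∀ t : Fin (2*n-1), ((q t.val).1 : Fin (n+1)) ≠ ((q t.val).2 : Fin (n+1)) := by
    intro t h
    obtain ⟨h1, h2⟩ := hbound t.val t.isLt
    obtain ⟨hv1, hv2⟩ := hvalcast t
    rw [Fin.ext_iff, hv1, hv2] at h
    omega
  have ginj : Function.Injective g := by
    intro s t h
    simp only [hg] at h
    obtain ⟨h1, h2⟩ := ee_sub_inj n (hne s) (hne t) h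
    obtain ⟨hv1, hv2⟩ := hvalcast s
    obtain ⟨hw1, hw2⟩ := hvalcast t
    rw [Fin.ext_iff, hv1, hw1] at h1
    rw [Fin.ext_iff, hv2, hw2] at h2
    exact Fin.ext (hqinj s.val s.isLt t.val t.isLt (Prod.ext h1 h2))
  have gmem : ∀ t : Fin (2*n-1), g t ∈ {v | (∃ a b : Fin (n+1), a < b ∧ v = ee n a - ee n b) ∧
      v ∉ Submodule.span ℝ (Set.range (aa n) \ {aa n i, aa n j})} := by
    intro t
    obtain ⟨h1, h2⟩ := hbound t.val t.isLt
    obtain ⟨hv1, hv2⟩ := hvalcast t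
    constructor
    · exact ⟨_, _, by rw [Fin.lt_def, hv1, hv2]; exact h1, rfl⟩
    · rcases hcross t.val t.isLt with ⟨hc1, hc2⟩ | ⟨hc1, hc2⟩
      · exact notin_span n i j i (Or.inl rfl) _ _ (by rw [hv1]; exact hc1) (by rw [hv2]; exact hc2)
      · exact notin_span n i j j (Or.inr rfl) _ _ (by rw [hv1]; exact hc1) (by rw [hv2]; exact hc2)
  have hTcard : (Finset.image g Finset.univ).card = 2*n-1 := by
    rw [Finset.card_image_of_injective _ ginj, Finset.card_univ, Fintype.card_fin]
  calc 2*n-1 = ((Finset.image g Finset.univ : Finset (Fin (n+1) → ℝ)) : Set (Fin (n+1) → ℝ)).ncard := by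
        rw [Set.ncard_coe_finset, hTcard]
    _ ≤ _ := by
        apply Set.ncard_le_ncard
        · intro v hv
          simp only [Finset.coe_image, Finset.coe_univ, Set.image_univ, Set.mem_range] at hv
          obtain ⟨t, rfl⟩ := hv
          exact gmem t
        · exact (Spn_finite n).subset (fun v hv => hv.1)

private lemma exact_count (n : ℕ) (hn : 2 ≤ n) :
    Set.ncard {v | (∃ a b : Fin (n+1), a < b ∧ v = ee n a - ee n b) ∧
      v ∉ Submodule.span ℝ (Set.range (aa n) \
        {aa n ⟨0, by omega⟩, aa n ⟨1, by omega⟩})} = 2*n-1 := by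
  set i0 : Fin n := ⟨0, by omega⟩ with hi0
  set i1 : Fin n := ⟨1, by omega⟩ with hi1
  set q : ℕ → ℕ × ℕ := fun t => if t < n then (0, t+1) else (1, t - n + 2) with hq
  have hbound : ∀ t, t < 2*n - 1 → (q t).1 < (q t).2 ∧ (q t).2 ≤ n := by
    intro t ht; simp only [hq]; split_ifs <;> constructor <;> simp <;> omega
  have hqinj : ∀ s, s < 2*n-1 → ∀ t, t < 2*n-1 → q s = q t → s = t := by
    intro s hs t ht h
    simp only [hq] at h
    split_ifs at h <;> (simp only [Prod.mk.injEq] at h; omega)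
  set g : Fin (2*n-1) → (Fin (n+1) → ℝ) := fun t =>
    ee n ((q t.val).1 : Fin (n+1)) - ee n ((q t.val).2 : Fin (n+1)) with hg
  have hvalcast : ∀ t : Fin (2*n-1),
      (((q t.val).1 : Fin (n+1)) : ℕ) = (q t.val).1 ∧
      (((q t.val).2 : Fin (n+1)) : ℕ) = (q t.val).2 := by
    intro t
    obtain ⟨h1, h2⟩ := hbound t.val t.isLt
    exact ⟨Fin.val_cast_of_lt (by omega), Fin.val_cast_of_lt (by omega)⟩
  have hne : ∀ t : Fin (2*n-1), ((q t.val).1 : Fin (n+1)) ≠ ((q t.val).2 : Fin (n+1)) := by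
    intro t h
    obtain ⟨h1, h2⟩ := hbound t.val t.isLt
    obtain ⟨hv1, hv2⟩ := hvalcast t
    rw [Fin.ext_iff, hv1, hv2] at h
    omega
  have ginj : Function.Injective g := by
    intro s t h
    simp only [hg] at h
    obtain ⟨h1, h2⟩ := ee_sub_inj n (hne s) (hne t) h
    obtain ⟨hv1, hv2⟩ := hvalcast s
    obtain ⟨hw1, hw2⟩ := hvalcast t
    rw [Fin.ext_iff, hv1, hw1] at h1
    rw [Fin.ext_iff, hv2, hw2] at h2
    exact Fin.ext (hqinj s.val s.isLt t.val t.isLt (Prod.ext h1 h2))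
  have hseteq : {v | (∃ a b : Fin (n+1), a < b ∧ v = ee n a - ee n b) ∧
      v ∉ Submodule.span ℝ (Set.range (aa n) \ {aa n i0, aa n i1})} =
      ((Finset.image g Finset.univ : Finset (Fin (n+1) → ℝ)) : Set (Fin (n+1) → ℝ)) := by
    apply Set.eq_of_subset_of_subset
    · rintro v ⟨⟨a, b, hab, rfl⟩, hnot⟩
      have haval : a.val ≤ 1 := by
        by_contra hcon
        push_neg at hcon
        apply hnot
        have hmem := mem_span_of_interval n {k : Fin n | 2 ≤ k.val} (b.val - a.val - 1) a b
          (by rw [Fin.lt_def] at hab; omega)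
          (fun k h1 h2 => by simp only [Set.mem_setOf_eq]; omega)
        refine Submodule.span_mono ?_ hmem
        rintro w ⟨k, hk, rfl⟩
        simp only [Set.mem_setOf_eq] at hk
        refine ⟨⟨k, rfl⟩, ?_⟩
        simp only [Set.mem_insert_iff, Set.mem_singleton_iff, not_or]
        constructor
        · intro h; have := aa_inj n h; rw [this, hi0] at hk; simp at hk
        · intro h; have := aa_inj n h; rw [this, hi1] at hk; simp at hk
      simp only [Finset.coe_image, Finset.coe_univ, Set.image_univ, Set.mem_range]
      have hbval : b.val ≤ n := by omega
      rw [Fin.lt_def] at hab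
      rcases Nat.le_one_iff_eq_zero_or_eq_one.mp haval with h0 | h1
      · refine ⟨⟨b.val - 1, by omega⟩, ?_⟩
        simp only [hg]
        have hqv : q (b.val - 1) = (0, b.val) := by
          simp only [hq]; rw [if_pos (by omega)]; congr 1; omega
        rw [hqv]
        congr 1 <;> apply congrArg <;> rw [Fin.ext_iff, Fin.val_cast_of_lt (by omega)] <;> omega
      · refine ⟨⟨n + b.val - 2, by omega⟩, ?_⟩
        simp only [hg]
        have hqv : q (n + b.val - 2) = (1, b.val) := by
          simp only [hq]; rw [if_neg (by omega)]; congr 1; omega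
        rw [hqv]
        congr 1 <;> apply congrArg <;> rw [Fin.ext_iff, Fin.val_cast_of_lt (by omega)] <;> omega
    · intro v hv
      simp only [Finset.coe_image, Finset.coe_univ, Set.image_univ, Set.mem_range] at hv
      obtain ⟨t, rfl⟩ := hv
      obtain ⟨h1, h2⟩ := hbound t.val t.isLt
      obtain ⟨hv1, hv2⟩ := hvalcast t
      have hcase : ((q t.val).1 = 0 ∧ 0 < (q t.val).2) ∨ ((q t.val).1 = 1 ∧ 1 < (q t.val).2) := by
        simp only [hq]; split_ifs <;> simp <;> omega
      constructor
      · exact ⟨_, _, by rw [Fin.lt_def, hv1, hv2]; exact h1, rfl⟩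
      · rcases hcase with ⟨hc1, hc2⟩ | ⟨hc1, hc2⟩
        · exact notin_span n i0 i1 i0 (Or.inl rfl) _ _ (by rw [hv1]; exact hc1.le) (by rw [hv2]; exact hc2)
        · exact notin_span n i0 i1 i1 (Or.inr rfl) _ _ (by rw [hv1]; exact hc1.le) (by rw [hv2]; exact hc2)
  rw [hseteq, Set.ncard_coe_finset,
    Finset.card_image_of_injective _ ginj, Finset.card_univ, Fintype.card_fin]

/-- In the root system of type `A_n` (`n ≥ 2`), the minimum over unordered pairs of distinct
simple roots `{α_i, α_j}` of the resonant codimension of `Π \ {α_i, α_j}` equals `2n - 1`. -/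
theorem stmt3 (n : ℕ) (hn : 2 ≤ n) :
    let e : Fin (n + 1) → (Fin (n + 1) → ℝ) := fun i => Pi.single i 1
    let Sp : Set (Fin (n + 1) → ℝ) :=
      {v | ∃ i j : Fin (n + 1), i < j ∧ v = e i - e j}
    let α : Fin n → (Fin (n + 1) → ℝ) := fun k => e k.castSucc - e k.succ
    let rc : Set (Fin (n + 1) → ℝ) → ℕ := fun Pi' =>
      Set.ncard {v | v ∈ Sp ∧ v ∉ Submodule.span ℝ Pi'}
    (⨅ p : {p : Fin n × Fin n // p.1 ≠ p.2},
      rc (Set.range α \ {α p.val.1, α p.val.2})) = 2 * n - 1 := by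
  intro e Sp α rc
  have hkey : ∀ p : {p : Fin n × Fin n // p.1 ≠ p.2},
      rc (Set.range α \ {α p.val.1, α p.val.2}) =
      Set.ncard {v | (∃ a b : Fin (n+1), a < b ∧ v = ee n a - ee n b) ∧
        v ∉ Submodule.span ℝ (Set.range (aa n) \ {aa n p.val.1, aa n p.val.2})} :=
    fun p => rfl
  have hp0 : ((⟨0, by omega⟩ : Fin n), (⟨1, by omega⟩ : Fin n)).1 ≠
      ((⟨0, by omega⟩ : Fin n), (⟨1, by omega⟩ : Fin n)).2 := by
    simp [Fin.ext_iff]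
  haveI : Nonempty {p : Fin n × Fin n // p.1 ≠ p.2} :=
    ⟨⟨(⟨0, by omega⟩, ⟨1, by omega⟩), hp0⟩⟩
  apply le_antisymm
  · have hle := ciInf_le (f := fun p : {p : Fin n × Fin n // p.1 ≠ p.2} =>
      rc (Set.range α \ {α p.val.1, α p.val.2})) (OrderBot.bddBelow _)
      ⟨(⟨0, by omega⟩, ⟨1, by omega⟩), hp0⟩
    refine hle.trans_eq ?_
    rw [hkey]
    exact exact_count n hn
  · apply le_ciInf
    intro p
    rw [hkey p]
    obtain ⟨⟨i, j⟩, hne⟩ := p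
    simp only at hne ⊢
    rcases Nat.lt_or_ge i.val j.val with h | h
    · exact lower_bound n i j h
    · have hji : j.val < i.val := by
        rcases Nat.lt_or_ge j.val i.val with h' | h'
        · exact h'
        · exact absurd (Fin.ext (le_antisymm h' h)) hne
      rw [Set.pair_comm (aa n i) (aa n j)]
      exact lower_bound n j i hji
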